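/- For every real c > 0 and every real d ≥ 0, the integral ∫₀^∞ exp(-c²·x)·I₀(d·√(2x)) dx converges and equals (1/c²)·exp(d²/(2c²)). -/

import Mathlib

open MeasureTheory Real Set

/-- Modified Bessel function of the first kind, order zero:
`I₀(x) = ∑ (x²/4)ⁿ / (n!)²`. -/
noncomputable def besselI0 (x : ℝ) : ℝ :=
  ∑' n : ℕ, (x ^ 2 / 4) ^ n / ((Nat.factorial n : ℝ)) ^ 2

/-- First-order Marcum Q-function:
`Q(a,b) = ∫_b^∞ x · exp(-(x²+a²)/2) · I₀(a·x) dx`. -/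
noncomputable def marcumQ (a b : ℝ) : ℝ :=
  ∫ x in Set.Ioi b, x * Real.exp (-(x ^ 2 + a ^ 2) / 2) * besselI0 (a * x)

/-- Normalized Rician fading density with Rician factor `K`. -/
noncomputable def ricianPDF (K h : ℝ) : ℝ :=
  (1 / 2) * Real.exp (-K - h / 2) * besselI0 (Real.sqrt (2 * K * h))

open scoped ENNReal NNReal

lemma term_le (y : ℝ) (hy : 0 ≤ y) (n : ℕ) :
    y ^ n / ((Nat.factorial n : ℝ)) ^ 2 ≤ y ^ n / (Nat.factorial n : ℝ) := by
  apply div_le_div_of_nonneg_left (by positivity) (by positivity)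
  have h1 : (1 : ℝ) ≤ (Nat.factorial n : ℝ) := by
    exact_mod_cast Nat.one_le_iff_ne_zero.mpr (Nat.factorial_ne_zero n)
  nlinarith

lemma summable_aux (y : ℝ) (hy : 0 ≤ y) :
    Summable (fun n : ℕ => y ^ n / ((Nat.factorial n : ℝ)) ^ 2) :=
  Summable.of_nonneg_of_le (fun n => by positivity) (term_le y hy)
    (Real.summable_pow_div_factorial y)

lemma exp_tsum (y : ℝ) : Real.exp y = ∑' n : ℕ, y ^ n / (Nat.factorial n : ℝ) := by
  rw [Real.exp_eq_exp_ℝ, NormedSpace.exp_eq_tsum_div]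

lemma bessel_eq (d x : ℝ) (hx : 0 ≤ x) :
    besselI0 (d * Real.sqrt (2 * x)) =
      ∑' n : ℕ, (d ^ 2 / 2) ^ n * x ^ n / ((Nat.factorial n : ℝ)) ^ 2 := by
  unfold besselI0
  refine tsum_congr fun n => ?_
  have h : (d * Real.sqrt (2 * x)) ^ 2 / 4 = (d ^ 2 / 2) * x := by
    rw [mul_pow, Real.sq_sqrt (by linarith)]; ring
  rw [h, mul_pow]

lemma pow_exp_integrableOn (c : ℝ) (hc : 0 < c) (n : ℕ) :
    IntegrableOn (fun x : ℝ => x ^ n * Real.exp (-(c ^ 2) * x)) (Ioi 0) := by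
  have h := integrableOn_rpow_mul_exp_neg_mul_rpow (p := 1) (s := (n : ℝ)) (b := c ^ 2)
    (by exact_mod_cast neg_one_lt_zero.trans_le (Nat.cast_nonneg n)) zero_lt_one (by positivity)
  refine h.congr_fun (fun x hx => ?_) measurableSet_Ioi
  dsimp only
  rw [Real.rpow_one, Real.rpow_natCast]

lemma pow_exp_integral (c : ℝ) (hc : 0 < c) (n : ℕ) :
    ∫ x in Ioi (0 : ℝ), x ^ n * Real.exp (-(c ^ 2) * x) =
      (Nat.factorial n : ℝ) / (c ^ 2) ^ (n + 1) := by
  have h := integral_rpow_mul_exp_neg_mul_Ioi (a := (n : ℝ) + 1) (r := c ^ 2)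
    (by positivity) (by positivity)
  rw [show ((n : ℝ) + 1 - 1) = (n : ℝ) by ring] at h
  rw [show (∫ x in Ioi (0 : ℝ), x ^ n * Real.exp (-(c ^ 2) * x)) =
      ∫ t in Ioi (0 : ℝ), t ^ (n : ℝ) * Real.exp (-(c ^ 2 * t)) from
    setIntegral_congr_fun measurableSet_Ioi fun x _ => by
      rw [Real.rpow_natCast, neg_mul], h]
  rw [show ((n : ℝ) + 1) = ((n + 1 : ℕ) : ℝ) by push_cast; ring, Real.rpow_natCast,
    show (((n + 1 : ℕ) : ℝ)) = ((n : ℝ) + 1) by push_cast; ring,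
    Real.Gamma_nat_eq_factorial, one_div, inv_pow]
  field_simp

theorem stmt_0 (c d : ℝ) (hc : 0 < c) (hd : 0 ≤ d) :
    IntegrableOn (fun x : ℝ => Real.exp (-(c ^ 2) * x) * besselI0 (d * Real.sqrt (2 * x)))
      (Set.Ioi 0) ∧
    ∫ x in Set.Ioi (0 : ℝ), Real.exp (-(c ^ 2) * x) * besselI0 (d * Real.sqrt (2 * x)) =
      (1 / c ^ 2) * Real.exp (d ^ 2 / (2 * c ^ 2)) := by
  set F : ℕ → ℝ → ℝ := fun n x =>
    ((d ^ 2 / 2) ^ n / ((Nat.factorial n : ℝ)) ^ 2) * (x ^ n * Real.exp (-(c ^ 2) * x)) with hF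
  set B : ℕ → ℝ := fun n => (1 / c ^ 2) * ((d ^ 2 / (2 * c ^ 2)) ^ n / (Nat.factorial n : ℝ))
    with hBdef
  set g : ℝ → ℝ := fun x => ∑' n, F n x with hg
  have hFnn : ∀ n, ∀ x : ℝ, 0 < x → 0 ≤ F n x := fun n x hx => by
    have := Real.exp_pos (-(c ^ 2) * x); positivity
  -- pointwise summability
  have hsum : ∀ x : ℝ, Summable (fun n => F n x) := by
    intro x
    have hS : Summable (fun n : ℕ =>
        (d ^ 2 * |x| / 2) ^ n / ((Nat.factorial n : ℝ)) ^ 2 * Real.exp (-(c ^ 2) * x)) :=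
      (summable_aux _ (by positivity)).mul_right _
    refine Summable.of_norm (Summable.of_nonneg_of_le (fun n => norm_nonneg _)
      (fun n => ?_) hS)
    have hxe : (d ^ 2 / 2) ^ n * |x| ^ n = (d ^ 2 * |x| / 2) ^ n := by
      rw [← mul_pow]; ring_nf
    rw [hF]
    simp only [norm_mul, Real.norm_eq_abs, abs_div, abs_pow, Real.abs_exp, abs_abs,
      abs_of_nonneg (show (0:ℝ) ≤ d ^ 2 / 2 by positivity), sq_abs, Nat.abs_cast]
    apply le_of_eq
    rw [← hxe]
    ring
  -- equality on Ioi 0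
  have hpt : ∀ x : ℝ, 0 < x →
      Real.exp (-(c ^ 2) * x) * besselI0 (d * Real.sqrt (2 * x)) = g x := by
    intro x hx
    rw [bessel_eq d x hx.le, hg, ← tsum_mul_left]
    exact tsum_congr fun n => by rw [hF]; ring
  -- each F n is integrable with integral B n
  have hFint : ∀ n, IntegrableOn (F n) (Ioi 0) :=
    fun n => (pow_exp_integrableOn c hc n).const_mul _
  have hFval : ∀ n, ∫ x in Ioi (0 : ℝ), F n x = B n := by
    intro n
    rw [hF]
    simp only []
    rw [integral_const_mul, pow_exp_integral c hc n, hBdef]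
    have hfac : (0:ℝ) < (Nat.factorial n : ℝ) := by positivity
    simp only []
    simp only [div_pow, mul_pow, pow_succ]
    have hfac2 : ((Nat.factorial n : ℝ)) ≠ 0 := ne_of_gt hfac
    have hc2 : (c:ℝ) ^ 2 ≠ 0 := by positivity
    field_simp
  have hBnn : ∀ n, 0 ≤ B n := fun n => by rw [hBdef]; positivity
  have hBsum : Summable B := by
    rw [hBdef]
    exact Summable.mul_left _ ((Real.summable_pow_div_factorial (d ^ 2 / (2 * c ^ 2))).congr
      (fun n => by simp [div_eq_mul_inv]))
  have hBtsum : ∑' n, B n = (1 / c ^ 2) * Real.exp (d ^ 2 / (2 * c ^ 2)) := by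
    rw [hBdef, tsum_mul_left, exp_tsum]
  -- lintegrals
  have hFcont : ∀ n, Continuous (F n) := fun n => by fun_prop
  have hlint : ∀ n, ∫⁻ x in Ioi (0 : ℝ), ‖F n x‖₊ = ENNReal.ofReal (B n) := by
    intro n
    calc (∫⁻ x in Ioi (0 : ℝ), (‖F n x‖₊ : ℝ≥0∞))
        = (∫⁻ x in Ioi (0 : ℝ), ENNReal.ofReal (F n x)) := by
          refine lintegral_congr_ae ((ae_restrict_iff' measurableSet_Ioi).2
            (Filter.Eventually.of_forall fun x hx => ?_))
          exact Real.enorm_eq_ofReal (hFnn n x hx)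
      _ = ENNReal.ofReal (∫ x in Ioi (0 : ℝ), F n x) :=
          (ofReal_integral_eq_lintegral_ofReal (hFint n)
            ((ae_restrict_iff' measurableSet_Ioi).2 (Filter.Eventually.of_forall
              fun x hx => hFnn n x hx))).symm
      _ = ENNReal.ofReal (B n) := by rw [hFval n]
  have hne : ∑' n, ∫⁻ x in Ioi (0 : ℝ), ‖F n x‖₊ ≠ ⊤ := by
    simp_rw [hlint]
    rw [← ENNReal.ofReal_tsum_of_nonneg hBnn hBsum]
    exact ENNReal.ofReal_ne_top
  have hFmeas : ∀ n, AEStronglyMeasurable (F n) (volume.restrict (Ioi (0:ℝ))) := fun n =>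
    (hFcont n).aestronglyMeasurable
  -- measurability of g
  have hgmeas : Measurable g := by
    apply measurable_of_tendsto_metrizable
      (f := fun N x => ∑ n ∈ Finset.range N, F n x)
      (fun N => Finset.measurable_sum _ fun n _ => (hFcont n).measurable)
    rw [tendsto_pi_nhds]
    intro x
    exact (hsum x).hasSum.tendsto_sum_nat
  -- integrability of g
  have hgint : IntegrableOn g (Ioi 0) := by
    refine ⟨hgmeas.aestronglyMeasurable, ?_⟩
    rw [hasFiniteIntegral_iff_norm]
    have heq : ∀ x ∈ Ioi (0:ℝ), ENNReal.ofReal ‖g x‖ = ∑' n, (‖F n x‖₊ : ℝ≥0∞) := by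
      intro x hx
      have h0 : 0 ≤ g x := tsum_nonneg fun n => hFnn n x hx
      rw [Real.norm_eq_abs, abs_of_nonneg h0, hg]
      rw [ENNReal.ofReal_tsum_of_nonneg (fun n => hFnn n x hx) (hsum x)]
      exact tsum_congr fun n => (Real.enorm_eq_ofReal (hFnn n x hx)).symm
    calc (∫⁻ x in Ioi (0:ℝ), ENNReal.ofReal ‖g x‖)
        = (∫⁻ x in Ioi (0:ℝ), ∑' n, (‖F n x‖₊ : ℝ≥0∞)) := by
          refine lintegral_congr_ae ((ae_restrict_iff' measurableSet_Ioi).2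
            (Filter.Eventually.of_forall heq))
      _ = ∑' n, ∫⁻ x in Ioi (0:ℝ), (‖F n x‖₊ : ℝ≥0∞) :=
          lintegral_tsum fun n => (hFmeas n).enorm
      _ < ⊤ := lt_top_iff_ne_top.2 hne
  have haeeq : g =ᵐ[volume.restrict (Ioi (0:ℝ))]
      (fun x : ℝ => Real.exp (-(c ^ 2) * x) * besselI0 (d * Real.sqrt (2 * x))) :=
    (ae_restrict_iff' measurableSet_Ioi).2
      (Filter.Eventually.of_forall fun x hx => (hpt x hx).symm)
  refine ⟨hgint.congr haeeq, ?_⟩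
  rw [← integral_congr_ae haeeq, hg]
  rw [integral_tsum hFmeas hne]
  simp_rw [hFval]
  exact hBtsum
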